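/- With the doubling map of the cubic Duffing oscillator (q,p) ↦ (q',p') defined by q' = (p² − 2a₄q⁴ − a₂q²)/(2√a₄ q p), p' = (q⁴(2a₄q² + a₂)² − (4a₄q⁴ + p²)p²)/(4√a₄ q²p²), the Jacobian determinant ∂(q',p')/∂(q,p) equals 2 wherever the map is defined; equivalently, if {q,p} = 1 then {q',p'} = 2. -/

import Mathlib

private lemma hasFDerivAt_pow_aux {E : Type*} [NormedAddCommGroup E] [NormedSpace ℝ E]
    {f : E → ℝ} {f' : E →L[ℝ] ℝ} {x : E} (h : HasFDerivAt f f' x) (n : ℕ) :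
    HasFDerivAt (fun y => f y ^ n) (((n : ℝ) * f x ^ (n - 1)) • f') x := by
  induction n with
  | zero => simpa using hasFDerivAt_const (1 : ℝ) x
  | succ m ih =>
    have h2 := ih.fun_mul h
    have : (fun y => f y ^ m * f y) = fun y => f y ^ (m + 1) := by
      funext y; rw [pow_succ]
    rw [this] at h2
    refine h2.congr_fderiv ?_
    rcases m with _ | k
    · simp
    · rw [smul_smul, ← add_smul]
      congr 1
      simp only [Nat.succ_sub_one]
      push_cast
      ring

private lemma hasFDerivAt_div_aux {E : Type*} [NormedAddCommGroup E] [NormedSpace ℝ E]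
    {f g : E → ℝ} {f' g' : E →L[ℝ] ℝ} {x : E} (hf : HasFDerivAt f f' x)
    (hg : HasFDerivAt g g' x) (hx : g x ≠ 0) :
    HasFDerivAt (fun y => f y / g y) ((g x)⁻¹ • f' - (f x / g x ^ 2) • g') x := by
  have hinv : HasFDerivAt (fun y => (g y)⁻¹)
      ((ContinuousLinearMap.smulRight (1 : ℝ →L[ℝ] ℝ) (-(g x ^ 2)⁻¹)).comp g') x :=
    (hasFDerivAt_inv hx).comp x hg
  have h := hf.fun_mul hinv
  have hfun : (fun y => f y * (g y)⁻¹) = fun y => f y / g y := by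
    funext y; rw [div_eq_mul_inv]
  rw [hfun] at h
  refine h.congr_fderiv ?_
  ext v
  simp only [ContinuousLinearMap.coe_sub', Pi.sub_apply, ContinuousLinearMap.coe_smul',
    Pi.smul_apply, ContinuousLinearMap.add_apply, ContinuousLinearMap.smul_apply,
    ContinuousLinearMap.coe_comp', Function.comp_apply,
    ContinuousLinearMap.smulRight_apply, ContinuousLinearMap.one_apply, smul_eq_mul]
  field_simp
  ring

/-- The doubling map of the cubic Duffing oscillator is a canonical transformation of
valence 2: its Jacobian determinant equals 2 wherever it is defined. -/
theorem duffing_doubling_jacobian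
    (a₂ a₄ : ℝ) (ha : 0 < a₄)
    (F : ℝ × ℝ → ℝ × ℝ)
    (hF : ∀ z : ℝ × ℝ,
      F z = ((z.2 ^ 2 - 2 * a₄ * z.1 ^ 4 - a₂ * z.1 ^ 2)
                / (2 * Real.sqrt a₄ * z.1 * z.2),
             (z.1 ^ 4 * (2 * a₄ * z.1 ^ 2 + a₂) ^ 2
                - (4 * a₄ * z.1 ^ 4 + z.2 ^ 2) * z.2 ^ 2)
                / (4 * Real.sqrt a₄ * z.1 ^ 2 * z.2 ^ 2)))
    (q p : ℝ) (hq : q ≠ 0) (hp : p ≠ 0) :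
    LinearMap.det ((fderiv ℝ F (q, p)).toLinearMap) = 2 := by
  have hFeq : F = fun z : ℝ × ℝ =>
      ((z.2 ^ 2 - 2 * a₄ * z.1 ^ 4 - a₂ * z.1 ^ 2)
          / (2 * Real.sqrt a₄ * z.1 * z.2),
       (z.1 ^ 4 * (2 * a₄ * z.1 ^ 2 + a₂) ^ 2
          - (4 * a₄ * z.1 ^ 4 + z.2 ^ 2) * z.2 ^ 2)
          / (4 * Real.sqrt a₄ * z.1 ^ 2 * z.2 ^ 2)) := funext hF
  set s : ℝ := Real.sqrt a₄ with hs_def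
  have hs : s ≠ 0 := ne_of_gt (Real.sqrt_pos.mpr ha)
  have hs2 : s ^ 2 = a₄ := Real.sq_sqrt ha.le
  have hden1 : (2 * s * (q, p).1 * (q, p).2) ≠ 0 := by
    simp only []
    positivity
  have hden2 : (4 * s * (q, p).1 ^ 2 * (q, p).2 ^ 2) ≠ 0 := by
    simp only []
    positivity
  have hfst : HasFDerivAt (fun z : ℝ × ℝ => z.1)
      (ContinuousLinearMap.fst ℝ ℝ ℝ) (q, p) := hasFDerivAt_fst
  have hsnd : HasFDerivAt (fun z : ℝ × ℝ => z.2)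
      (ContinuousLinearMap.snd ℝ ℝ ℝ) (q, p) := hasFDerivAt_snd
  have hnum1 := ((hasFDerivAt_pow_aux hsnd 2).fun_sub ((hasFDerivAt_pow_aux hfst 4).const_mul (2 * a₄))).fun_sub
      ((hasFDerivAt_pow_aux hfst 2).const_mul a₂)
  have hd1 := (hfst.const_mul (2 * s)).fun_mul hsnd
  have h1 := hasFDerivAt_div_aux hnum1 hd1 hden1
  have hnum2 := ((hasFDerivAt_pow_aux hfst 4).fun_mul
      (hasFDerivAt_pow_aux (((hasFDerivAt_pow_aux hfst 2).const_mul (2 * a₄)).add_const a₂) 2)).fun_sub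
      ((((hasFDerivAt_pow_aux hfst 4).const_mul (4 * a₄)).fun_add (hasFDerivAt_pow_aux hsnd 2)).fun_mul (hasFDerivAt_pow_aux hsnd 2))
  have hd2 := ((hasFDerivAt_pow_aux hfst 2).const_mul (4 * s)).fun_mul (hasFDerivAt_pow_aux hsnd 2)
  have h2 := hasFDerivAt_div_aux hnum2 hd2 hden2
  have hAll := h1.prodMk h2
  rw [hFeq, hAll.fderiv]
  rw [← LinearMap.det_toMatrix (Module.Basis.finTwoProd ℝ), Matrix.det_fin_two]
  simp only [LinearMap.toMatrix_apply, ContinuousLinearMap.coe_coe,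
    Module.Basis.finTwoProd_zero, Module.Basis.finTwoProd_one, Module.Basis.coe_finTwoProd_repr,
    ContinuousLinearMap.prod_apply, ContinuousLinearMap.smulRight_apply,
    ContinuousLinearMap.sub_apply, ContinuousLinearMap.add_apply,
    ContinuousLinearMap.smul_apply, ContinuousLinearMap.coe_fst',
    ContinuousLinearMap.coe_snd', smul_eq_mul, Matrix.cons_val_zero, Matrix.cons_val_one]
  field_simp
  rw [← hs2]
  ring
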